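/- Let X be a proper, geodesically complete, Gromov δ-hyperbolic, Busemann metric space with height function h. Let z₀ ∈ ℝ, p ∈ X_{z₀} and M ≥ 288δ. Then for all z ≤ z₀ and for every point p_z ∈ π_z({p}) one has the inclusions D_{2(z₀−z)−M}(p_z) ⊆ π_z(D_M(p)) ⊆ D_{2(z₀−z)+M}(p_z). -/

import Mathlib

open Set Filter MeasureTheory
open scoped ENNReal

noncomputable section

/-- `Φ` is a `(k,c)`-quasi-isometry with respect to the explicit distance
functions `dA` and `dB`. -/
def QIWith {A B : Type*} (dA : A → A → ℝ) (dB : B → B → ℝ) (k c : ℝ) (Φ : A → B) : Prop :=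
  (∀ x x' : A, k⁻¹ * dA x x' - c ≤ dB (Φ x) (Φ x') ∧ dB (Φ x) (Φ x') ≤ k * dA x x' + c) ∧
    ∀ y : B, ∃ x : A, dB (Φ x) y ≤ c

/-- `γ` is a geodesic (parametrized by arclength) on the parameter set `s`,
with respect to the distance function `d`. -/
def IsGeodesicOnD {Z : Type*} (d : Z → Z → ℝ) (γ : ℝ → Z) (s : Set ℝ) : Prop :=
  ∀ t ∈ s, ∀ u ∈ s, d (γ t) (γ u) = |t - u|

/-- `γ` is a geodesic parametrized proportionally to arclength on `s`. -/
def IsAffineGeodesicOnD {Z : Type*} (d : Z → Z → ℝ) (γ : ℝ → Z) (s : Set ℝ) : Prop :=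
  ∃ c : ℝ, 0 ≤ c ∧ ∀ t ∈ s, ∀ u ∈ s, d (γ t) (γ u) = c * |t - u|

/-- Gromov hyperbolicity (four-point condition) for the distance function `d`. -/
def GromovHyperbolicD {Z : Type*} (d : Z → Z → ℝ) (δ : ℝ) : Prop :=
  ∀ x y z w : Z, d x y + d z w ≤ max (d x z + d y w) (d x w + d y z) + 2 * δ

/-- Every two points are joined by a geodesic. -/
def GeodesicSpaceD {Z : Type*} (d : Z → Z → ℝ) : Prop :=
  ∀ x y : Z, ∃ γ : ℝ → Z, γ 0 = x ∧ γ (d x y) = y ∧ IsGeodesicOnD d γ (Icc 0 (d x y))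

/-- Every geodesic segment extends to a bi-infinite geodesic line. -/
def GeodesicallyCompleteD {Z : Type*} (d : Z → Z → ℝ) : Prop :=
  ∀ (γ : ℝ → Z) (a b : ℝ), a ≤ b → IsGeodesicOnD d γ (Icc a b) →
    ∃ γ' : ℝ → Z, IsGeodesicOnD d γ' univ ∧ EqOn γ γ' (Icc a b)

/-- Busemann convexity: the distance between any two geodesics parametrized
proportionally to arclength is a convex function. -/
def BusemannD {Z : Type*} (d : Z → Z → ℝ) : Prop :=
  ∀ (γ₁ γ₂ : ℝ → Z) (s : Set ℝ), Convex ℝ s →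
    IsAffineGeodesicOnD d γ₁ s → IsAffineGeodesicOnD d γ₂ s →
    ConvexOn ℝ s fun t => d (γ₁ t) (γ₂ t)

/-- A proper, geodesically complete, Gromov `δ`-hyperbolic, Busemann metric space
together with a distinguished vertical geodesic ray `ray` from the base point
`ray 0`, determining a boundary point `a ∈ ∂X`. -/
structure HoroSpace (X : Type*) [MetricSpace X] where
  δ : ℝ
  δ_nonneg : 0 ≤ δ
  proper : ProperSpace X
  hyperbolic : GromovHyperbolicD (fun x y : X => dist x y) δ
  geodesic : GeodesicSpaceD (fun x y : X => dist x y)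
  geodComplete : GeodesicallyCompleteD (fun x y : X => dist x y)
  busemann : BusemannD (fun x y : X => dist x y)
  ray : ℝ → X
  ray_geodesic : IsGeodesicOnD (fun x y : X => dist x y) ray (Ici 0)

/-- The height function `h(x) = −limsup_{t→∞} (d(x, V_w(t)) − t)`
(the opposite of the Busemann function of the distinguished ray). -/
def HoroSpace.height {X : Type*} [MetricSpace X] (H : HoroSpace X) (x : X) : ℝ :=
  - Filter.limsup (fun t : ℝ => dist x (H.ray t) - t) Filter.atTop

/-- The disk `D_r(p)` of radius `r` around `p` inside the horosphere through `p`. -/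
def HoroSpace.disk {X : Type*} [MetricSpace X] (H : HoroSpace X) (r : ℝ) (p : X) : Set X :=
  {x : X | H.height x = H.height p ∧ dist x p ≤ r}

/-- The projection `π_z(A)`: points of the horosphere at height `z` whose upward
vertical geodesic ray meets `A`. -/
def HoroSpace.proj {X : Type*} [MetricSpace X] (H : HoroSpace X) (z : ℝ) (A : Set X) :
    Set X :=
  {x : X | H.height x = z ∧ ∃ γ : ℝ → X,
      IsGeodesicOnD (fun a b : X => dist a b) γ (Ici z) ∧
      (∀ t ∈ Ici z, H.height (γ t) = t) ∧ γ z = x ∧ ∃ t ∈ Ici z, γ t ∈ A}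

/-- The horospherical product `X ⋈ Y`: pairs whose heights add up to zero. -/
abbrev HoroProd {X Y : Type*} [MetricSpace X] [MetricSpace Y]
    (HX : HoroSpace X) (HY : HoroSpace Y) : Type _ :=
  {p : X × Y // HX.height p.1 + HY.height p.2 = 0}

/-- `V` is a vertical geodesic of `X ⋈ Y` on the parameter set `s`: a pair of
vertical geodesics of `X` and `Y` at opposite heights, parametrized by arclength
by its height (up to orientation and an additive shift). -/
def IsVerticalOn {X Y : Type*} [MetricSpace X] [MetricSpace Y]
    (HX : HoroSpace X) (HY : HoroSpace Y)
    (V : ℝ → HoroProd HX HY) (s : Set ℝ) : Prop :=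
  IsGeodesicOnD (fun a b : X => dist a b) (fun t => (V t).1.1) s ∧
  IsGeodesicOnD (fun a b : Y => dist a b) (fun t => (V t).1.2) s ∧
  ∀ t ∈ s, ∀ u ∈ s, |HX.height ((V t).1.1) - HX.height ((V u).1.1)| = |t - u|

/-- A distance `d_⋈` on `X ⋈ Y` induced by an admissible norm: the height is
`1`-Lipschitz, `2·d_⋈ ≥ d_X + d_Y`, `d_⋈` agrees with
`d_X + d_Y − Δh` up to a bounded additive constant, and vertical geodesics of
`X ⋈ Y` are geodesics for `d_⋈`. -/
structure HoroMetric {X Y : Type*} [MetricSpace X] [MetricSpace Y]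
    (HX : HoroSpace X) (HY : HoroSpace Y) where
  d : HoroProd HX HY → HoroProd HX HY → ℝ
  d_self : ∀ p, d p p = 0
  d_comm : ∀ p q, d p q = d q p
  d_triangle : ∀ p q r, d p r ≤ d p q + d q r
  eq_of_d : ∀ p q, d p q = 0 → p = q
  height_lip : ∀ p q, |HX.height p.1.1 - HX.height q.1.1| ≤ d p q
  two_d_ge : ∀ p q, dist p.1.1 q.1.1 + dist p.1.2 q.1.2 ≤ 2 * d p q
  C : ℝ
  C_nonneg : 0 ≤ C
  approx : ∀ p q,
    |d p q - (dist p.1.1 q.1.1 + dist p.1.2 q.1.2 -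
      |HX.height p.1.1 - HX.height q.1.1|)| ≤ C
  vertical_geodesic : ∀ (V : ℝ → HoroProd HX HY) (s : Set ℝ),
    IsVerticalOn HX HY V s → ∀ t ∈ s, ∀ u ∈ s, d (V t) (V u) = |t - u|

/-- `γ` is a `(k,c)`-quasigeodesic on the parameter set `s`. -/
def IsQGOn {Z : Type*} (d : Z → Z → ℝ) (k c : ℝ) (γ : ℝ → Z) (s : Set ℝ) : Prop :=
  ∀ t ∈ s, ∀ u ∈ s,
    k⁻¹ * |t - u| - c ≤ d (γ t) (γ u) ∧ d (γ t) (γ u) ≤ k * |t - u| + c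

/-- `γ` is continuous on `s` with respect to the distance function `d`. -/
def ContOnD {Z : Type*} (d : Z → Z → ℝ) (γ : ℝ → Z) (s : Set ℝ) : Prop :=
  ∀ t ∈ s, ∀ ε > (0 : ℝ), ∃ η > (0 : ℝ), ∀ u ∈ s, |u - t| < η → d (γ t) (γ u) < ε

/-- `γ : [a,b] → Z` is `ε`-monotone with respect to the height function `hgt`:
equal heights force parameters to be `ε·(b−a)`-close. -/
def EpsMonotoneOn {Z : Type*} (hgt : Z → ℝ) (ε : ℝ) (γ : ℝ → Z) (a b : ℝ) : Prop :=
  ∀ t₁ ∈ Icc a b, ∀ t₂ ∈ Icc a b, hgt (γ t₁) = hgt (γ t₂) → |t₁ - t₂| ≤ ε * (b - a)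

/-- The closed `r`-neighbourhood of `A` with respect to the distance function `d`. -/
def nbhdD {Z : Type*} (d : Z → Z → ℝ) (r : ℝ) (A : Set Z) : Set Z :=
  {p : Z | ∃ a ∈ A, d p a ≤ r}

open scoped Topology

section Helpers
variable {X : Type*} [MetricSpace X] (H : HoroSpace X)

lemma HoroSpace.tendsto_height (x : X) :
    Tendsto (fun s : ℝ => dist x (H.ray s) - s) atTop (𝓝 (-H.height x)) := by
  set g : ℝ → ℝ := fun s => dist x (H.ray (max s 0)) - max s 0 with hg
  have hant : Antitone g := by
    intro s u hsu
    have h0s : (0:ℝ) ≤ max s 0 := le_max_right _ _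
    have h0u : (0:ℝ) ≤ max u 0 := le_max_right _ _
    have hmax : max s 0 ≤ max u 0 := max_le_max hsu le_rfl
    have htri : dist x (H.ray (max u 0)) ≤ dist x (H.ray (max s 0)) +
        dist (H.ray (max s 0)) (H.ray (max u 0)) := dist_triangle _ _ _
    have hd : dist (H.ray (max s 0)) (H.ray (max u 0)) = |max s 0 - max u 0| :=
      H.ray_geodesic _ (mem_Ici.2 h0s) _ (mem_Ici.2 h0u)
    rw [abs_of_nonpos (by linarith)] at hd
    simp only [hg]
    linarith
  have hbdd : BddBelow (range g) := by
    refine ⟨-dist x (H.ray 0), ?_⟩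
    rintro _ ⟨s, rfl⟩
    have hd : dist (H.ray 0) (H.ray (max s 0)) = |0 - max s 0| :=
      H.ray_geodesic 0 (mem_Ici.2 le_rfl) _ (mem_Ici.2 (le_max_right _ _))
    rw [abs_of_nonpos (by simp)] at hd
    have htri : dist (H.ray 0) (H.ray (max s 0)) ≤ dist (H.ray 0) x + dist x (H.ray (max s 0)) :=
      dist_triangle _ _ _
    have := dist_comm (H.ray 0) x
    simp only [hg]
    linarith
  have htend : Tendsto g atTop (𝓝 (⨅ s, g s)) := tendsto_atTop_ciInf hant hbdd
  have heq : (fun s : ℝ => dist x (H.ray s) - s) =ᶠ[atTop] g := by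
    filter_upwards [eventually_ge_atTop (0:ℝ)] with s hs
    simp [hg, max_eq_left hs]
  have htend2 : Tendsto (fun s : ℝ => dist x (H.ray s) - s) atTop (𝓝 (⨅ s, g s)) :=
    htend.congr' heq.symm
  have hls : Filter.limsup (fun s : ℝ => dist x (H.ray s) - s) atTop = ⨅ s, g s :=
    htend2.limsup_eq
  have : -H.height x = ⨅ s, g s := by rw [HoroSpace.height, neg_neg, hls]
  rwa [this]

lemma HoroSpace.height_lip (x y : X) : |H.height x - H.height y| ≤ dist x y := by
  have hx := H.tendsto_height x
  have hy := H.tendsto_height y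
  have hsub : Tendsto (fun s : ℝ => (dist x (H.ray s) - s) - (dist y (H.ray s) - s)) atTop
      (𝓝 (-H.height x - -H.height y)) := hx.sub hy
  have habs : Tendsto (fun s : ℝ => |(dist x (H.ray s) - s) - (dist y (H.ray s) - s)|) atTop
      (𝓝 |(-H.height x - -H.height y)|) := hsub.abs
  have hle : ∀ s : ℝ, |(dist x (H.ray s) - s) - (dist y (H.ray s) - s)| ≤ dist x y := by
    intro s
    have : (dist x (H.ray s) - s) - (dist y (H.ray s) - s) = dist x (H.ray s) - dist y (H.ray s) := by ring
    rw [this]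
    exact abs_dist_sub_le _ _ _
  have := le_of_tendsto habs (Eventually.of_forall hle)
  have heq : |(-H.height x - -H.height y)| = |H.height x - H.height y| := by
    rw [← abs_neg]; ring_nf
  linarith [heq ▸ this]

lemma HoroSpace.height_convex {σ : ℝ → X} {L : ℝ} (hL : 0 ≤ L)
    (hσ : IsGeodesicOnD (fun a b : X => dist a b) σ (Icc 0 L))
    {a b : ℝ} (ha : 0 ≤ a) (hb : 0 ≤ b) (hab : a + b = 1) :
    -(H.height (σ (b * L))) ≤ a * (-(H.height (σ 0))) + b * (-(H.height (σ L))) := by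
  have key : ∀ s : ℝ, dist (σ (b * L)) (H.ray s) - s ≤
      a * (dist (σ 0) (H.ray s) - s) + b * (dist (σ L) (H.ray s) - s) := by
    intro s
    have hcvx : ConvexOn ℝ (Icc 0 L) fun t => dist (σ t) (H.ray s) := by
      refine H.busemann σ (fun _ => H.ray s) (Icc 0 L) (convex_Icc _ _) ⟨1, zero_le_one, ?_⟩
        ⟨0, le_rfl, ?_⟩
      · intro t ht u hu; rw [hσ t ht u hu, one_mul]
      · intro t _ u _; simp
    have h0 : (0:ℝ) ∈ Icc 0 L := ⟨le_rfl, hL⟩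
    have hLm : L ∈ Icc (0:ℝ) L := ⟨hL, le_rfl⟩
    have := hcvx.2 h0 hLm ha hb hab
    simp only [smul_eq_mul, mul_zero, zero_add] at this
    have hexp : a * (dist (σ 0) (H.ray s) - s) + b * (dist (σ L) (H.ray s) - s) =
        a * dist (σ 0) (H.ray s) + b * dist (σ L) (H.ray s) - s := by
      linear_combination (-s) * hab
    linarith
  have h1 : Tendsto (fun s : ℝ => dist (σ (b * L)) (H.ray s) - s) atTop
      (𝓝 (-H.height (σ (b * L)))) := H.tendsto_height _
  have h2 : Tendsto (fun s : ℝ => a * (dist (σ 0) (H.ray s) - s) + b * (dist (σ L) (H.ray s) - s))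
      atTop (𝓝 (a * (-H.height (σ 0)) + b * (-H.height (σ L)))) :=
    ((H.tendsto_height (σ 0)).const_mul a).add ((H.tendsto_height (σ L)).const_mul b)
  exact le_of_tendsto_of_tendsto h1 h2 (Eventually.of_forall key)

lemma HoroSpace.gp_ineq (a b c w : X) :
    min ((dist a w + dist c w - dist a c) / 2) ((dist c w + dist b w - dist c b) / 2) - H.δ ≤
      (dist a w + dist b w - dist a b) / 2 := by
  have h := H.hyperbolic a b c w
  simp only at h
  rcases max_cases (dist a c + dist b w) (dist a w + dist b c) with ⟨h1, _⟩ | ⟨h1, _⟩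
  · rw [h1] at h
    have := min_le_left ((dist a w + dist c w - dist a c) / 2)
      ((dist c w + dist b w - dist c b) / 2)
    linarith
  · rw [h1] at h
    have := min_le_right ((dist a w + dist c w - dist a c) / 2)
      ((dist c w + dist b w - dist c b) / 2)
    have hcb : dist c b = dist b c := dist_comm c b
    linarith

end Helpers

/-- For `p` at height `z₀` and `M ≥ 288δ`, for all `z ≤ z₀`
and every point `p_z` of the projection of `p` to height `z`, one has
`D_{2(z₀−z)−M}(p_z) ⊆ π_z(D_M(p)) ⊆ D_{2(z₀−z)+M}(p_z)`. -/
theorem statement_14 {X : Type*} [MetricSpace X] (H : HoroSpace X)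
    (z₀ : ℝ) (p : X) (hp : H.height p = z₀) (M : ℝ) (hM : 288 * H.δ ≤ M) :
    ∀ z ≤ z₀, ∀ pz ∈ H.proj z {p},
      H.disk (2 * (z₀ - z) - M) pz ⊆ H.proj z (H.disk M p) ∧
      H.proj z (H.disk M p) ⊆ H.disk (2 * (z₀ - z) + M) pz := by
  haveI : ProperSpace X := H.proper
  have hδ := H.δ_nonneg
  have hM0 : (0:ℝ) ≤ M := le_trans (by linarith) hM
  intro z hz pz hpz
  simp only [HoroSpace.proj, mem_setOf_eq, mem_singleton_iff] at hpz
  obtain ⟨hpzh, γ, hγ, hγh, hγz, t₀, ht₀m, hγt₀⟩ := hpz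
  have hγd : ∀ s ∈ Ici z, ∀ u ∈ Ici z, dist (γ s) (γ u) = |s - u| := hγ
  have ht₀ : t₀ = z₀ := by
    have h1 := hγh t₀ ht₀m
    rw [hγt₀, hp] at h1
    exact h1.symm
  rw [ht₀] at ht₀m hγt₀
  have hz' : z ≤ z₀ := hz
  have hdppz : dist p pz = z₀ - z := by
    rw [← hγt₀, ← hγz, hγd z₀ ht₀m z self_mem_Ici, abs_of_nonneg (by linarith)]
  constructor
  · -- hard inclusion
    intro x hx
    simp only [HoroSpace.disk, mem_setOf_eq] at hx
    obtain ⟨hxh, hxd⟩ := hx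
    have hxz : H.height x = z := hxh.trans hpzh
    set D := dist x pz with hDdef
    have hD0 : (0:ℝ) ≤ D := dist_nonneg
    clear_value D
    set T : ℕ → ℝ := fun n => z₀ + D + n with hTdef
    have hTval : ∀ n : ℕ, T n = z₀ + D + n := fun n => by simp only [hTdef]
    clear_value T
    have hTz₀ : ∀ n : ℕ, z₀ ≤ T n := by
      intro n; rw [hTval n]
      have : (0:ℝ) ≤ (n:ℝ) := Nat.cast_nonneg n
      linarith
    have hTz : ∀ n : ℕ, z ≤ T n := fun n => le_trans hz' (hTz₀ n)
    set L : ℕ → ℝ := fun n => dist x (γ (T n)) with hLdef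
    have hLval : ∀ n, L n = dist x (γ (T n)) := fun n => by simp only [hLdef]
    clear_value L
    have hgeo : ∀ n : ℕ, ∃ σ : ℝ → X, σ 0 = x ∧ σ (L n) = γ (T n) ∧
        IsGeodesicOnD (fun a b : X => dist a b) σ (Icc 0 (L n)) := by
      intro n; rw [hLval n]; exact H.geodesic x (γ (T n))
    choose σf hσ0 hσend hσg using hgeo
    have hσd : ∀ n, ∀ s ∈ Icc 0 (L n), ∀ u ∈ Icc 0 (L n),
        dist (σf n s) (σf n u) = |s - u| := fun n => hσg n
    have hL0 : ∀ n, 0 ≤ L n := fun n => by rw [hLval n]; exact dist_nonneg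
    have hγhT : ∀ n, H.height (γ (T n)) = T n := fun n => hγh (T n) (mem_Ici.2 (hTz n))
    have hLlow : ∀ n, T n - z ≤ L n := by
      intro n
      have h1 := H.height_lip x (γ (T n))
      rw [hxz, hγhT n] at h1
      have h2 : T n - z ≤ |z - T n| := by rw [abs_sub_comm]; exact le_abs_self _
      rw [hLval n]
      exact le_trans h2 h1
    have hLhigh : ∀ n, L n ≤ T n - z + D := by
      intro n
      have h1 : dist x (γ (T n)) ≤ dist x pz + dist pz (γ (T n)) := dist_triangle _ _ _
      have h2 : dist pz (γ (T n)) = T n - z := by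
        rw [← hγz, hγd z self_mem_Ici (T n) (mem_Ici.2 (hTz n)),
          abs_of_nonpos (by linarith [hTz n])]
        ring
      rw [hLval n]
      rw [h2] at h1
      rw [← hDdef] at h1
      linarith
    have hLn : ∀ n : ℕ, (n:ℝ) ≤ L n := by
      intro n
      have h1 := hLlow n
      rw [hTval n] at h1
      linarith
    -- height bounds along σf n
    have hup : ∀ n, ∀ s, 0 ≤ s → s ≤ L n → H.height (σf n s) ≤ z + s := by
      intro n s hs0 hsL
      have h1 := H.height_lip (σf n s) x
      have h2 : dist (σf n s) x = s := by
        have h3 := hσd n s ⟨hs0, hsL⟩ 0 ⟨le_rfl, hL0 n⟩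
        rw [hσ0 n] at h3
        rw [h3, sub_zero, abs_of_nonneg hs0]
      rw [h2, hxz] at h1
      have := (abs_le.1 h1).2
      linarith
    have hlow : ∀ n, ∀ s, 0 ≤ s → s ≤ L n → 0 < L n →
        z + s * (T n - z) / L n ≤ H.height (σf n s) := by
      intro n s hs0 hsL hLp
      have hb : s / L n * L n = s := div_mul_cancel₀ s (ne_of_gt hLp)
      have ha0 : 0 ≤ 1 - s / L n := by
        have : s / L n ≤ 1 := (div_le_one hLp).2 hsL
        linarith
      have hb0 : 0 ≤ s / L n := div_nonneg hs0 (le_of_lt hLp)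
      have hc := H.height_convex (hL0 n) (hσg n) ha0 hb0 (by ring)
      rw [hb, hσ0 n, hσend n, hxz, hγhT n] at hc
      have heq : z + s * (T n - z) / L n = -((1 - s / L n) * (-z) + s / L n * (-(T n))) := by
        field_simp
        ring
      rw [heq]
      linarith
    have hlow' : ∀ n, ∀ s, 0 ≤ s → s ≤ L n → 0 < L n →
        z + s - s * D / L n ≤ H.height (σf n s) := by
      intro n s hs0 hsL hLp
      have h1 := hlow n s hs0 hsL hLp
      have h2 : s * (L n - D) ≤ s * (T n - z) :=
        mul_le_mul_of_nonneg_left (by linarith [hLhigh n]) hs0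
      have h3 : s * (L n - D) / L n ≤ s * (T n - z) / L n := by
        apply div_le_div_of_nonneg_right h2 hLp.le
      have h4 : s * (L n - D) / L n = s - s * D / L n := by
        field_simp
      rw [h4] at h3
      linarith
    -- ultrafilter limit
    set 𝒰 : Ultrafilter ℕ := Ultrafilter.of atTop with h𝒰def
    have h𝒰le : (𝒰 : Filter ℕ) ≤ atTop := h𝒰def ▸ Ultrafilter.of_le atTop
    clear_value 𝒰
    set ρ : ℕ → ℝ → X := fun n s => σf n (max 0 (min s (L n))) with hρdef
    have hρval : ∀ n s, ρ n s = σf n (max 0 (min s (L n))) := fun n s => by simp only [hρdef]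
    clear_value ρ
    have hρc : ∀ n (s : ℝ), max 0 (min s (L n)) ∈ Icc 0 (L n) :=
      fun n s => ⟨le_max_left _ _, max_le (hL0 n) (min_le_right _ _)⟩
    have hρball : ∀ (s : ℝ) n, ρ n s ∈ Metric.closedBall x (max 0 s) := by
      intro s n
      have h1 := hσd n _ (hρc n s) 0 ⟨le_rfl, hL0 n⟩
      rw [hσ0 n] at h1
      rw [Metric.mem_closedBall, hρval n s, h1, sub_zero,
        abs_of_nonneg (le_max_left _ _)]
      exact max_le (le_max_left _ _) (le_trans (min_le_left _ _) (le_max_right _ _))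
    have hex : ∀ s : ℝ, ∃ y, Tendsto (fun n => ρ n s) (𝒰 : Filter ℕ) (𝓝 y) := by
      intro s
      have hle : (𝒰.map (fun n => ρ n s) : Filter X) ≤ 𝓟 (Metric.closedBall x (max 0 s)) := by
        rw [Ultrafilter.coe_map, le_principal_iff, mem_map]
        exact univ_mem' (fun n => hρball s n)
      obtain ⟨y, -, hy⟩ := (isCompact_closedBall x (max 0 s)).ultrafilter_le_nhds _ hle
      rw [Ultrafilter.coe_map] at hy
      exact ⟨y, hy⟩
    choose σl hσl using hex
    have hev : ∀ s : ℝ, 0 ≤ s → ∀ᶠ n in (𝒰 : Filter ℕ), ρ n s = σf n s ∧ s ≤ L n := by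
      intro s hs
      apply Eventually.filter_mono h𝒰le
      filter_upwards [eventually_ge_atTop ⌈s⌉₊] with n hn
      have hsn : s ≤ (n:ℝ) := Nat.ceil_le.1 hn
      have hsL : s ≤ L n := le_trans hsn (hLn n)
      exact ⟨by rw [hρval, min_eq_left hsL, max_eq_right hs], hsL⟩
    have hσl0 : σl 0 = x := by
      have h1 : (fun n => ρ n 0) = fun _ => x := by
        funext n
        rw [hρval, min_eq_left (hL0 n), max_self, hσ0 n]
      exact tendsto_nhds_unique (hσl 0) (by rw [h1]; exact tendsto_const_nhds)
    have hσld : ∀ s u : ℝ, 0 ≤ s → 0 ≤ u → dist (σl s) (σl u) = |s - u| := by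
      intro s u hs hu
      have h1 : Tendsto (fun n => dist (ρ n s) (ρ n u)) (𝒰 : Filter ℕ)
          (𝓝 (dist (σl s) (σl u))) := (hσl s).dist (hσl u)
      have h2 : (fun n => dist (ρ n s) (ρ n u)) =ᶠ[(𝒰 : Filter ℕ)] fun _ => |s - u| := by
        filter_upwards [hev s hs, hev u hu] with n hns hnu
        rw [hns.1, hnu.1]
        exact hσd n s ⟨hs, hns.2⟩ u ⟨hu, hnu.2⟩
      exact tendsto_nhds_unique h1 (Tendsto.congr' h2.symm tendsto_const_nhds)
    have hheightcont : Continuous H.height := by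
      apply LipschitzWith.continuous (K := 1)
      apply LipschitzWith.of_dist_le_mul
      intro a b
      rw [Real.dist_eq, NNReal.coe_one, one_mul]
      exact H.height_lip a b
    have hσlh : ∀ s : ℝ, 0 ≤ s → H.height (σl s) = z + s := by
      intro s hs
      have hth : Tendsto (fun n => H.height (ρ n s)) (𝒰 : Filter ℕ)
          (𝓝 (H.height (σl s))) := (hheightcont.tendsto _).comp (hσl s)
      have hub : H.height (σl s) ≤ z + s := by
        apply le_of_tendsto hth
        filter_upwards [hev s hs] with n hn
        rw [hn.1]
        exact hup n s hs hn.2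
      have htd : Tendsto (fun n : ℕ => z + s - s * D / n) atTop (𝓝 (z + s)) := by
        have h0 := tendsto_const_div_atTop_nhds_zero_nat (s * D)
        have h1 := (tendsto_const_nhds (x := z + s) (f := (atTop : Filter ℕ))).sub h0
        rwa [sub_zero] at h1
      have hlb : z + s ≤ H.height (σl s) := by
        apply le_of_tendsto_of_tendsto (htd.mono_left h𝒰le) hth
        filter_upwards [hev s hs, h𝒰le (eventually_ge_atTop 1)] with n hn hn1
        have hnR : (1:ℝ) ≤ (n:ℝ) := by exact_mod_cast hn1
        have hLp : (0:ℝ) < L n := lt_of_lt_of_le (by linarith) (hLn n)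
        rw [hn.1]
        have h1 := hlow' n s hs hn.2 hLp
        have h2 : s * D / L n ≤ s * D / n :=
          div_le_div_of_nonneg_left (by positivity) (by linarith) (hLn n)
        linarith
      linarith
    -- the 4δ estimate
    have hest : ∀ n : ℕ, dist (σf n (L n - (T n - z₀))) p ≤ 4 * H.δ := by
      intro n
      have htn0 : 0 ≤ T n - z₀ := by linarith [hTz₀ n]
      have hs1 : z₀ - z ≤ L n - (T n - z₀) := by linarith [hLlow n]
      have hs0 : 0 ≤ L n - (T n - z₀) := by linarith
      have hsL : L n - (T n - z₀) ≤ L n := by linarith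
      have d1 : dist p (γ (T n)) = T n - z₀ := by
        rw [← hγt₀, hγd z₀ ht₀m (T n) (mem_Ici.2 (hTz n)), abs_of_nonpos (by linarith)]
        ring
      have d2 : dist pz (γ (T n)) = T n - z := by
        rw [← hγz, hγd z self_mem_Ici (T n) (mem_Ici.2 (hTz n)),
          abs_of_nonpos (by linarith [hTz n])]
        ring
      have d4 : dist x (γ (T n)) = L n := (hLval n).symm
      have d5 : dist (σf n (L n - (T n - z₀))) (γ (T n)) = T n - z₀ := by
        rw [← hσend n, hσd n _ ⟨hs0, hsL⟩ (L n) ⟨hL0 n, le_rfl⟩,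
          abs_of_nonpos (by linarith)]
        ring
      have d6 : dist x (σf n (L n - (T n - z₀))) = L n - (T n - z₀) := by
        rw [← hσ0 n, hσd n 0 ⟨le_rfl, hL0 n⟩ _ ⟨hs0, hsL⟩, abs_of_nonpos (by linarith)]
        ring
      have hpzx : dist pz x = D := by rw [dist_comm]; exact hDdef.symm
      have gp1 := H.gp_ineq p x pz (γ (T n))
      have gp2 := H.gp_ineq p (σf n (L n - (T n - z₀))) x (γ (T n))
      rw [d1, d2, d4, hdppz, hpzx] at gp1
      rw [d1, d4, d5, d6] at gp2
      have hmin1 : T n - z₀ ≤ min ((T n - z₀ + (T n - z) - (z₀ - z)) / 2)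
          ((T n - z + L n - D) / 2) :=
        le_min (by linarith) (by linarith [hLlow n, hxd, hM0])
      have h1 : T n - z₀ - H.δ ≤ (T n - z₀ + L n - dist p x) / 2 := by linarith [gp1]
      have hmin2 : T n - z₀ - H.δ ≤ min ((T n - z₀ + L n - dist p x) / 2)
          ((L n + (T n - z₀) - (L n - (T n - z₀))) / 2) := le_min h1 (by linarith)
      have final : dist p (σf n (L n - (T n - z₀))) ≤ 4 * H.δ := by linarith [gp2]
      rw [dist_comm]
      exact final
    -- pass to the limit
    have hK : Tendsto (fun n : ℕ => 8 * H.δ + (z₀ - z + D) * D / n) atTop (𝓝 (8 * H.δ)) := by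
      have h0 := tendsto_const_div_atTop_nhds_zero_nat ((z₀ - z + D) * D)
      have h1 := (tendsto_const_nhds (x := 8 * H.δ) (f := (atTop : Filter ℕ))).add h0
      rwa [add_zero] at h1
    have hests : dist (σl (z₀ - z)) p ≤ 8 * H.δ := by
      have h1 : Tendsto (fun n => dist (ρ n (z₀ - z)) p) (𝒰 : Filter ℕ)
          (𝓝 (dist (σl (z₀ - z)) p)) := (hσl _).dist tendsto_const_nhds
      apply le_of_tendsto_of_tendsto h1 (hK.mono_left h𝒰le)
      filter_upwards [hev (z₀ - z) (by linarith), h𝒰le (eventually_ge_atTop 1)] with n hn hn1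
      rw [hn.1]
      have hnR : (1:ℝ) ≤ (n:ℝ) := by exact_mod_cast hn1
      have hLp : (0:ℝ) < L n := lt_of_lt_of_le (by linarith) (hLn n)
      have htn0 : 0 ≤ T n - z₀ := by linarith [hTz₀ n]
      have hs1ge : z₀ - z ≤ L n - (T n - z₀) := by linarith [hLlow n]
      have hs1le : L n - (T n - z₀) ≤ z₀ - z + D := by linarith [hLhigh n]
      have hs10 : 0 ≤ L n - (T n - z₀) := by linarith
      have hs1L : L n - (T n - z₀) ≤ L n := by linarith
      have hA := hest n
      have hB := H.height_lip (σf n (L n - (T n - z₀))) p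
      rw [hp] at hB
      have hBl := hlow' n (L n - (T n - z₀)) hs10 hs1L hLp
      have habs := (abs_le.1 (le_trans hB hA)).2
      have hnum : (L n - (T n - z₀)) * D ≤ (z₀ - z + D) * D :=
        mul_le_mul_of_nonneg_right hs1le hD0
      have hdiv : (L n - (T n - z₀)) * D / L n ≤ (z₀ - z + D) * D / n :=
        div_le_div₀ (mul_nonneg (by linarith) hD0) hnum (by linarith) (hLn n)
      have hdd : dist (σf n (z₀ - z)) (σf n (L n - (T n - z₀))) = L n - (T n - z₀) - (z₀ - z) := by
        rw [hσd n (z₀ - z) ⟨by linarith, by linarith⟩ _ ⟨hs10, hs1L⟩,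
          abs_of_nonpos (by linarith)]
        ring
      have htri := dist_triangle (σf n (z₀ - z)) (σf n (L n - (T n - z₀))) p
      show dist (σf n (z₀ - z)) p ≤ 8 * H.δ + (z₀ - z + D) * D / (n:ℝ)
      linarith [htri, hdd, hA, hBl, habs, hdiv]
    -- assemble membership
    simp only [HoroSpace.proj, HoroSpace.disk, mem_setOf_eq]
    refine ⟨hxz, fun u => σl (u - z), ?_, ?_, ?_, z₀, ht₀m, ?_, ?_⟩
    · intro s hs u hu
      have h1 := hσld (s - z) (u - z) (by linarith [mem_Ici.1 hs]) (by linarith [mem_Ici.1 hu])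
      show dist (σl (s - z)) (σl (u - z)) = |s - u|
      rw [h1]
      congr 1
      ring
    · intro s hs
      show H.height (σl (s - z)) = s
      rw [hσlh (s - z) (by linarith [mem_Ici.1 hs])]
      ring
    · show σl (z - z) = x
      rw [sub_self]
      exact hσl0
    · show H.height (σl (z₀ - z)) = H.height p
      rw [hσlh (z₀ - z) (by linarith), hp]
      ring
    · show dist (σl (z₀ - z)) p ≤ M
      exact le_trans hests (by linarith)
  · -- easy inclusion
    intro x hx
    simp only [HoroSpace.proj, HoroSpace.disk, mem_setOf_eq] at hx
    obtain ⟨hxh, γ', hγ'g, hγ'h, hγ'z, t, htm, hth, htdist⟩ := hx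
    have hγ'd : ∀ s ∈ Ici z, ∀ u ∈ Ici z, dist (γ' s) (γ' u) = |s - u| := hγ'g
    have htz : t = z₀ := by
      have h1 := hγ'h t htm
      rw [hth, hp] at h1
      exact h1.symm
    rw [htz] at htm hth htdist
    simp only [HoroSpace.disk, mem_setOf_eq]
    refine ⟨hxh.trans hpzh.symm, ?_⟩
    have h1 : dist x (γ' z₀) = z₀ - z := by
      rw [← hγ'z, hγ'd z self_mem_Ici z₀ htm, abs_of_nonpos (by linarith)]
      ring
    have h2 := dist_triangle x (γ' z₀) pz
    have h3 := dist_triangle (γ' z₀) p pz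
    linarith
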